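/- Special case of the geometric-sequence sum bound: if ε is nonincreasing nonnegative, γ > 1, and σ ≥ 1, then ∑_{k=1}^∞ ε(σ + γ^k − 1) ≤ (1/log γ)·( ε(z)·log z + ∫_z^∞ ε(x)/x dx ) where z = σ + γ − 1. -/

import Mathlib

open MeasureTheory Set Real Filter
open scoped ENNReal

/-- lintegral of `B / x` over `Ioc c d` equals `B * log (d / c)`. -/
lemma lint_aux (c d B : ℝ) (hc : 0 < c) (hcd : c ≤ d) (hB : 0 ≤ B) :
    ∫⁻ x in Set.Ioc c d, ENNReal.ofReal (B / x)
      = ENNReal.ofReal B * ENNReal.ofReal (Real.log (d / c)) := by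
  have h0 : (0 : ℝ) ∉ Set.uIcc c d := by
    rw [Set.uIcc_of_le hcd]
    intro h
    exact absurd h.1 (by linarith)
  have hcont : ContinuousOn (fun x : ℝ => 1 / x) (Set.uIcc c d) := by
    apply ContinuousOn.div continuousOn_const continuousOn_id
    intro x hx
    rw [Set.uIcc_of_le hcd] at hx
    exact ne_of_gt (lt_of_lt_of_le hc hx.1)
  have hint : IntegrableOn (fun x : ℝ => 1 / x) (Set.Ioc c d) := by
    rw [← intervalIntegrable_iff_integrableOn_Ioc_of_le hcd]
    exact hcont.intervalIntegrable
  have hnn : 0 ≤ᵐ[volume.restrict (Set.Ioc c d)] fun x : ℝ => 1 / x := by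
    refine (ae_restrict_iff' measurableSet_Ioc).mpr (ae_of_all _ fun x hx => ?_)
    have : 0 < x := lt_of_lt_of_le hc hx.1.le
    positivity
  have hmeas : Measurable fun x : ℝ => ENNReal.ofReal (1 / x) :=
    (measurable_const.div measurable_id).ennreal_ofReal
  calc ∫⁻ x in Set.Ioc c d, ENNReal.ofReal (B / x)
      = ∫⁻ x in Set.Ioc c d, ENNReal.ofReal B * ENNReal.ofReal (1 / x) := by
        congr 1; funext x
        rw [← ENNReal.ofReal_mul hB, mul_one_div]
    _ = ENNReal.ofReal B * ∫⁻ x in Set.Ioc c d, ENNReal.ofReal (1 / x) :=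
        lintegral_const_mul' _ _ ENNReal.ofReal_ne_top
    _ = ENNReal.ofReal B * ENNReal.ofReal (∫ x in Set.Ioc c d, 1 / x) := by
        rw [ofReal_integral_eq_lintegral_ofReal hint hnn]
    _ = ENNReal.ofReal B * ENNReal.ofReal (Real.log (d / c)) := by
        rw [← intervalIntegral.integral_of_le hcd, integral_one_div h0]

theorem stmt_7 (ε : ℝ → ℝ) (hmono : Antitone ε) (hnonneg : ∀ x, 0 ≤ ε x)
    (γ σ : ℝ) (hγ : 1 < γ) (hσ : 1 ≤ σ) :
    ∑' k : ℕ, ε (σ + γ ^ (k + 1) - 1)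
      ≤ (1 / Real.log γ) * (ε (σ + γ - 1) * Real.log (σ + γ - 1)
          + ∫ x in Set.Ioi (σ + γ - 1), ε x / x) := by
  set z : ℝ := σ + γ - 1 with hzdef
  let a : ℕ → ℝ := fun k => σ + γ ^ (k + 1) - 1
  show (∑' k : ℕ, ε (a k)) ≤ (1 / Real.log γ) * (ε z * Real.log z + ∫ x in Set.Ioi z, ε x / x)
  have hγ0 : (0 : ℝ) < γ := lt_trans one_pos hγ
  have hzγ : γ ≤ z := by rw [hzdef]; linarith
  have hz1 : (1 : ℝ) < z := lt_of_lt_of_le hγ hzγ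
  have hz0 : (0 : ℝ) < z := lt_trans one_pos hz1
  have hpow_le_a : ∀ k, γ ^ (k + 1) ≤ a k := fun k => by
    simp only [a]; linarith
  have hza : ∀ k, z ≤ a k := fun k => by
    have h1 : γ ≤ γ ^ (k + 1) := le_self_pow₀ hγ.le (Nat.succ_ne_zero k)
    simp only [a, hzdef]; linarith
  have ha_pos : ∀ k, 0 < a k := fun k => lt_of_lt_of_le hz0 (hza k)
  have ha_mono : Monotone a := by
    intro m n hmn
    have : γ ^ (m + 1) ≤ γ ^ (n + 1) := pow_le_pow_right₀ hγ.le (by omega)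
    simp only [a]; linarith
  have hεm : Measurable ε := hmono.measurable
  have hlogγ : 0 < Real.log γ := Real.log_pos hγ
  set F : ℝ → ℝ≥0∞ := fun x => ENNReal.ofReal (ε (max x z) / x) with hFdef
  set L : ℝ≥0∞ := ∫⁻ x in Set.Ioi z, ENNReal.ofReal (ε x / x) with hLdef
  set T : ℝ≥0∞ := ∑' k : ℕ, ENNReal.ofReal (ε (a k)) with hTdef
  -- Step 1: per-term lower bound by integral of F over Ioc (γ^k) (γ^(k+1))
  have step1 : ∀ k : ℕ, ENNReal.ofReal (ε (a k)) * ENNReal.ofReal (Real.log γ)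
      ≤ ∫⁻ x in Set.Ioc (γ ^ k) (γ ^ (k + 1)), F x := by
    intro k
    have hc : 0 < γ ^ k := pow_pos hγ0 k
    have hcd : γ ^ k ≤ γ ^ (k + 1) := pow_le_pow_right₀ hγ.le (Nat.le_succ k)
    have hratio : γ ^ (k + 1) / γ ^ k = γ := by
      rw [pow_succ]; field_simp
    have key : ∫⁻ x in Set.Ioc (γ ^ k) (γ ^ (k + 1)), ENNReal.ofReal (ε (a k) / x)
        ≤ ∫⁻ x in Set.Ioc (γ ^ k) (γ ^ (k + 1)), F x := by
      refine setLIntegral_mono' measurableSet_Ioc fun x hx => ?_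
      have hx0 : 0 < x := lt_trans hc hx.1
      exact ENNReal.ofReal_le_ofReal
        (div_le_div_of_nonneg_right
          (hmono (max_le (hx.2.trans (hpow_le_a k)) (hza k))) hx0.le)
    calc ENNReal.ofReal (ε (a k)) * ENNReal.ofReal (Real.log γ)
        = ∫⁻ x in Set.Ioc (γ ^ k) (γ ^ (k + 1)), ENNReal.ofReal (ε (a k) / x) := by
          rw [lint_aux _ _ _ hc hcd (hnonneg _), hratio]
      _ ≤ _ := key
  -- Step 2: sum of these integrals is at most the integral over Ioi 1
  have hdisj : Pairwise (Function.onFun Disjoint fun k : ℕ => Set.Ioc (γ ^ k) (γ ^ (k + 1))) := by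
    have hm : Monotone fun k : ℕ => γ ^ k := fun m n h => pow_le_pow_right₀ hγ.le h
    simpa using hm.pairwise_disjoint_on_Ioc_succ
  have step2 : (∑' k : ℕ, ∫⁻ x in Set.Ioc (γ ^ k) (γ ^ (k + 1)), F x)
      ≤ ∫⁻ x in Set.Ioi (1 : ℝ), F x := by
    rw [← lintegral_iUnion (fun k => measurableSet_Ioc) hdisj]
    apply lintegral_mono_set
    intro x hx
    simp only [Set.mem_iUnion] at hx
    obtain ⟨k, hk⟩ := hx
    have h1 : (1 : ℝ) ≤ γ ^ k := by
      calc (1 : ℝ) = γ ^ 0 := (pow_zero γ).symm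
        _ ≤ γ ^ k := pow_le_pow_right₀ hγ.le (Nat.zero_le k)
    exact lt_of_le_of_lt h1 hk.1
  -- Step 3: split the integral over Ioi 1
  have hsplit : ∫⁻ x in Set.Ioi (1 : ℝ), F x
      = (∫⁻ x in Set.Ioc (1 : ℝ) z, F x) + ∫⁻ x in Set.Ioi z, F x := by
    rw [← lintegral_union measurableSet_Ioi Set.Ioc_disjoint_Ioi_same,
      Set.Ioc_union_Ioi_eq_Ioi hz1.le]
  have h4 : ∫⁻ x in Set.Ioc (1 : ℝ) z, F x
      = ENNReal.ofReal (ε z) * ENNReal.ofReal (Real.log z) := by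
    have hcong : ∀ᵐ x ∂(volume.restrict (Set.Ioc (1:ℝ) z)),
        F x = ENNReal.ofReal (ε z / x) := by
      refine (ae_restrict_iff' measurableSet_Ioc).mpr (ae_of_all _ fun x hx => ?_)
      simp only [hFdef, max_eq_right hx.2]
    rw [lintegral_congr_ae hcong, lint_aux _ _ _ one_pos hz1.le (hnonneg z), div_one]
  have h5 : ∫⁻ x in Set.Ioi z, F x = L := by
    rw [hLdef]
    refine lintegral_congr_ae ?_
    refine (ae_restrict_iff' measurableSet_Ioi).mpr (ae_of_all _ fun x hx => ?_)
    simp only [hFdef, max_eq_left (le_of_lt (Set.mem_Ioi.mp hx))]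
  -- Main inequality in ℝ≥0∞
  have hstar : T * ENNReal.ofReal (Real.log γ)
      ≤ ENNReal.ofReal (ε z) * ENNReal.ofReal (Real.log z) + L := by
    calc T * ENNReal.ofReal (Real.log γ)
        = ∑' k : ℕ, ENNReal.ofReal (ε (a k)) * ENNReal.ofReal (Real.log γ) :=
          ENNReal.tsum_mul_right.symm
      _ ≤ ∑' k : ℕ, ∫⁻ x in Set.Ioc (γ ^ k) (γ ^ (k + 1)), F x :=
          ENNReal.tsum_le_tsum step1
      _ ≤ ∫⁻ x in Set.Ioi (1 : ℝ), F x := step2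
      _ = _ := by rw [hsplit, h4, h5]
  -- Reverse comparison: L ≤ T * log γ
  have hcover : Set.Ioi z ⊆ ⋃ k : ℕ, Set.Ioc (a k) (a (k + 1)) := by
    intro x hx
    have hex : ∃ k, x ≤ a k := by
      obtain ⟨n, hn⟩ := ((tendsto_pow_atTop_atTop_of_one_lt hγ).eventually_ge_atTop x).exists
      refine ⟨n, hn.trans ?_⟩
      calc γ ^ n ≤ γ ^ (n + 1) := pow_le_pow_right₀ hγ.le (Nat.le_succ n)
        _ ≤ a n := hpow_le_a n
    classical
    have ha0 : a 0 = z := by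
      show σ + γ ^ (0 + 1) - 1 = z
      rw [hzdef]; norm_num
    have hfind := Nat.find_spec hex
    rcases hm : Nat.find hex with _ | m
    · exfalso
      rw [hm, ha0] at hfind
      exact absurd hfind (not_le.mpr hx)
    · have hlt : ¬ x ≤ a m := Nat.find_min hex (by omega)
      simp only [Set.mem_iUnion]
      exact ⟨m, not_le.mp hlt, by rw [hm] at hfind; exact hfind⟩
  have stepR : ∀ k : ℕ, ∫⁻ x in Set.Ioc (a k) (a (k + 1)), ENNReal.ofReal (ε x / x)
      ≤ ENNReal.ofReal (ε (a k)) * ENNReal.ofReal (Real.log γ) := by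
    intro k
    have hratio : a (k + 1) / a k ≤ γ := by
      rw [div_le_iff₀ (ha_pos k)]
      have h1 : (0:ℝ) ≤ (γ - 1) * (σ - 1) := mul_nonneg (by linarith) (by linarith)
      have h2 : γ ^ (k + 1 + 1) = γ * γ ^ (k + 1) := by ring
      simp only [a]
      nlinarith [pow_pos hγ0 (k + 1)]
    calc ∫⁻ x in Set.Ioc (a k) (a (k + 1)), ENNReal.ofReal (ε x / x)
        ≤ ∫⁻ x in Set.Ioc (a k) (a (k + 1)), ENNReal.ofReal (ε (a k) / x) := by
          refine setLIntegral_mono' measurableSet_Ioc fun x hx => ?_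
          have hx0 : 0 < x := lt_trans (ha_pos k) hx.1
          exact ENNReal.ofReal_le_ofReal
            (div_le_div_of_nonneg_right (hmono hx.1.le) hx0.le)
      _ = ENNReal.ofReal (ε (a k)) * ENNReal.ofReal (Real.log (a (k+1) / a k)) :=
          lint_aux _ _ _ (ha_pos k) (ha_mono (Nat.le_succ k)) (hnonneg _)
      _ ≤ ENNReal.ofReal (ε (a k)) * ENNReal.ofReal (Real.log γ) := by
          exact mul_le_mul_right (ENNReal.ofReal_le_ofReal
            (Real.log_le_log (div_pos (ha_pos (k+1)) (ha_pos k)) hratio)) _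
  have hrev : L ≤ T * ENNReal.ofReal (Real.log γ) := by
    calc L ≤ ∫⁻ x in ⋃ k : ℕ, Set.Ioc (a k) (a (k + 1)), ENNReal.ofReal (ε x / x) :=
          lintegral_mono_set hcover
      _ ≤ ∑' k : ℕ, ∫⁻ x in Set.Ioc (a k) (a (k + 1)), ENNReal.ofReal (ε x / x) :=
          lintegral_iUnion_le _ _
      _ ≤ ∑' k : ℕ, ENNReal.ofReal (ε (a k)) * ENNReal.ofReal (Real.log γ) :=
          ENNReal.tsum_le_tsum stepR
      _ = T * ENNReal.ofReal (Real.log γ) := ENNReal.tsum_mul_right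
  -- Case split on summability
  by_cases hsum : Summable fun k : ℕ => ε (a k)
  · -- summable case
    have hS0 : 0 ≤ ∑' k : ℕ, ε (a k) := tsum_nonneg fun k => hnonneg _
    have hT : T = ENNReal.ofReal (∑' k : ℕ, ε (a k)) :=
      (ENNReal.ofReal_tsum_of_nonneg (fun k => hnonneg _) hsum).symm
    have hTne : T ≠ ⊤ := by rw [hT]; exact ENNReal.ofReal_ne_top
    have hLne : L ≠ ⊤ :=
      ne_top_of_le_ne_top (ENNReal.mul_ne_top hTne ENNReal.ofReal_ne_top) hrev
    have hInt : (∫ x in Set.Ioi z, ε x / x) = L.toReal := by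
      rw [hLdef, integral_eq_lintegral_of_nonneg_ae]
      · refine (ae_restrict_iff' measurableSet_Ioi).mpr (ae_of_all _ fun x hx => ?_)
        exact div_nonneg (hnonneg x) (lt_trans hz0 hx).le
      · exact ((hεm.div measurable_id).aestronglyMeasurable)
    have hRHSne : ENNReal.ofReal (ε z) * ENNReal.ofReal (Real.log z) + L ≠ ⊤ :=
      ENNReal.add_ne_top.mpr
        ⟨ENNReal.mul_ne_top ENNReal.ofReal_ne_top ENNReal.ofReal_ne_top, hLne⟩
    have hmain := ENNReal.toReal_mono hRHSne hstar
    rw [hT, ← ENNReal.ofReal_mul hS0, ← ENNReal.ofReal_mul (hnonneg z),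
      ENNReal.toReal_add (ENNReal.ofReal_ne_top) hLne,
      ENNReal.toReal_ofReal (mul_nonneg hS0 hlogγ.le),
      ENNReal.toReal_ofReal (mul_nonneg (hnonneg z) (Real.log_nonneg hz1.le))] at hmain
    -- hmain : (∑' k, ε (a k)) * log γ ≤ ε z * log z + L.toReal
    rw [hInt]
    rw [one_div, inv_mul_eq_div]
    exact (le_div_iff₀ hlogγ).mpr hmain
  · -- not summable: LHS is zero, RHS is nonneg
    rw [tsum_eq_zero_of_not_summable hsum]
    have hI : 0 ≤ ∫ x in Set.Ioi z, ε x / x := by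
      refine setIntegral_nonneg measurableSet_Ioi fun x hx => ?_
      exact div_nonneg (hnonneg x) (lt_trans hz0 hx).le
    have h1 : 0 ≤ ε z * Real.log z := mul_nonneg (hnonneg z) (Real.log_nonneg hz1.le)
    have h2 : 0 ≤ 1 / Real.log γ := by positivity
    exact mul_nonneg h2 (by linarith)
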